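/- For all integers n ≥ 1 and m ≥ 1, the polynomial P(t) = 1 + t + t^{3m+2} + t^{2n+3m-1} + t^{2n+6m} + t^{2n+6m+1} has a root z on the unit circle in ℂ with z ∉ {−1} ∪ {primitive cube roots of unity} such that z is a simple root of P (i.e., P(z) = 0 and P'(z) ≠ 0). -/

import Mathlib

open Polynomial

open Complex in
private lemma key_id' (E a b K s : ℝ) (hb : E + 1 + K = 2*b) (ha : E + 1 - K = 2*a) :
    1 + Complex.exp (2*s*I) + Complex.exp (2*a*s*I) + Complex.exp (2*b*s*I)
      + Complex.exp (2*E*s*I) + Complex.exp (2*(E+1)*s*I)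
    = 2 * Complex.exp ((E+1)*(s:ℂ)*I) *
        (2 * Complex.cos s * Complex.cos ((E:ℂ)*s) + Complex.cos ((K:ℂ)*s)) := by
  have hb' : ((E:ℂ)+1+K) = 2*b := by exact_mod_cast congrArg Complex.ofReal hb
  have ha' : ((E:ℂ)+1-K) = 2*a := by exact_mod_cast congrArg Complex.ofReal ha
  have h1 : Complex.exp ((E+1)*(s:ℂ)*I) * (Complex.exp ((s:ℂ)*I) * Complex.exp ((E:ℂ)*s*I))
      = Complex.exp (2*(E+1)*(s:ℂ)*I) := by
    rw [← Complex.exp_add, ← Complex.exp_add]; congr 1; ring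
  have h2 : Complex.exp ((E+1)*(s:ℂ)*I) * (Complex.exp ((s:ℂ)*I) * Complex.exp (-((E:ℂ)*s)*I))
      = Complex.exp (2*(s:ℂ)*I) := by
    rw [← Complex.exp_add, ← Complex.exp_add]; congr 1; ring
  have h3 : Complex.exp ((E+1)*(s:ℂ)*I) * (Complex.exp (-(s:ℂ)*I) * Complex.exp ((E:ℂ)*s*I))
      = Complex.exp (2*(E:ℂ)*s*I) := by
    rw [← Complex.exp_add, ← Complex.exp_add]; congr 1; ring
  have h4 : Complex.exp ((E+1)*(s:ℂ)*I) * (Complex.exp (-(s:ℂ)*I) * Complex.exp (-((E:ℂ)*s)*I))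
      = 1 := by
    rw [← Complex.exp_add, ← Complex.exp_add]
    rw [show ((E:ℂ)+1)*(s:ℂ)*I + (-(s:ℂ)*I + -((E:ℂ)*s)*I) = 0 by ring, Complex.exp_zero]
  have h5 : Complex.exp ((E+1)*(s:ℂ)*I) * Complex.exp ((K:ℂ)*s*I)
      = Complex.exp (2*(b:ℂ)*s*I) := by
    rw [← Complex.exp_add]; congr 1; linear_combination ((s:ℂ)*I) * hb'
  have h6 : Complex.exp ((E+1)*(s:ℂ)*I) * Complex.exp (-((K:ℂ)*s)*I)
      = Complex.exp (2*(a:ℂ)*s*I) := by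
    rw [← Complex.exp_add]; congr 1; linear_combination ((s:ℂ)*I) * ha'
  simp only [Complex.cos]
  linear_combination -(h1 + h2 + h3 + h4 + h5 + h6)

open Real in
set_option maxHeartbeats 1000000 in
private lemma real_root' (E : ℕ) (hE : 8 ≤ E) (K : ℝ) (hK : |K| ≤ E) :
    ∃ s : ℝ, 0 < s ∧ s < π/E ∧
      (2 * Real.cos s * Real.cos (E*s) + Real.cos (K*s) = 0) ∧
      (-(2 * Real.sin s) * Real.cos (E*s) - 2*E*Real.cos s*Real.sin (E*s)
        - K * Real.sin (K*s) < 0) := by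
  have hE0 : (0:ℝ) < E := by positivity
  have hE8 : (8:ℝ) ≤ E := by exact_mod_cast hE
  have hπ : (0:ℝ) < π := Real.pi_pos
  set f : ℝ → ℝ := fun s => 2 * Real.cos s * Real.cos (E*s) + Real.cos (K*s) with hf
  have hcont : ContinuousOn f (Set.Icc 0 (π/E)) := by fun_prop
  have hfa : f 0 = 3 := by simp [hf]; norm_num
  have hE3 : π / E < π / 3 := div_lt_div_of_pos_left hπ (by norm_num) (by linarith)
  have hcosE : Real.cos (π/3) < Real.cos (π/E) :=
    Real.cos_lt_cos_of_nonneg_of_le_pi (by positivity) (by linarith) hE3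
  have h1 : (E:ℝ) * (π/E) = π := by field_simp
  have hfb : f (π/E) < 0 := by
    rw [hf]; simp only [h1, Real.cos_pi]
    rw [Real.cos_pi_div_three] at hcosE
    have := Real.cos_le_one (K*(π/E))
    linarith
  obtain ⟨s, hsmem, hfs⟩ := intermediate_value_Ioo' (by positivity : (0:ℝ) ≤ π/E) hcont
    (Set.mem_Ioo.2 ⟨hfb, by rw [hfa]; norm_num⟩)
  obtain ⟨hs0, hsb⟩ := Set.mem_Ioo.1 hsmem
  refine ⟨s, hs0, hsb, hfs, ?_⟩
  -- bounds
  have hs4 : s < 2/5 := by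
    have : π / E ≤ π / 8 := by
      apply div_le_div_of_nonneg_left hπ.le (by norm_num) hE8
    nlinarith [Real.pi_lt_d2]
  have hroot : 2 * Real.cos s * Real.cos ((E:ℝ)*s) + Real.cos (K*s) = 0 := hfs
  clear hfs hsmem hcont hfa hfb hcosE hf h1 hE f
  have hsinle : Real.sin s ≤ s := le_of_lt (Real.sin_lt hs0)
  have hsinpos : 0 ≤ Real.sin s := Real.sin_nonneg_of_nonneg_of_le_pi hs0.le
    (by nlinarith [hE3])
  have hc1pos : 0 < Real.cos s := Real.cos_pos_of_mem_Ioo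
    ⟨by linarith, by nlinarith [Real.pi_gt_three]⟩
  have hpyth1 := Real.sin_sq_add_cos_sq s
  have hc1 : (91:ℝ)/100 ≤ Real.cos s := by nlinarith
  have hEs0 : 0 < (E:ℝ)*s := by positivity
  have hEsπ : (E:ℝ)*s < π := by
    have h2 := (lt_div_iff₀ hE0).1 hsb
    nlinarith [h2]
  have hs2pos : 0 < Real.sin ((E:ℝ)*s) := Real.sin_pos_of_pos_of_lt_pi hEs0 hEsπ
  have hpyth2 := Real.sin_sq_add_cos_sq ((E:ℝ)*s)
  have hc3le := Real.cos_le_one (K*s)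
  have hc3ge := Real.neg_one_le_cos (K*s)
  have hs3le := Real.sin_le_one (K*s)
  have hs3ge := Real.neg_one_le_sin (K*s)
  have hc1sq : (8281:ℝ)/10000 ≤ (Real.cos s)^2 := by nlinarith
  have hsq : (Real.cos (K*s))^2 = 4 * (Real.cos s)^2 * (Real.cos ((E:ℝ)*s))^2 := by
    linear_combination (Real.cos (K*s) - 2 * Real.cos s * Real.cos ((E:ℝ)*s)) * hroot
  have hc3sq : (Real.cos (K*s))^2 ≤ 1 := by nlinarith
  have h4 : 4*(Real.cos s)^2*(Real.cos ((E:ℝ)*s))^2 ≤ 1 := by linarith [hsq, hc3sq]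
  have hc2sq : (Real.cos ((E:ℝ)*s))^2 ≤ (55/100)^2 := by
    nlinarith [h4, mul_nonneg (by linarith : (0:ℝ) ≤ (Real.cos s)^2 - 8281/10000) (sq_nonneg (Real.cos ((E:ℝ)*s)))]
  have hs2 : (83:ℝ)/100 ≤ Real.sin ((E:ℝ)*s) := by nlinarith [hpyth2, hc2sq, hs2pos]
  have habs := abs_le.1 hK
  have hB : -(E:ℝ) ≤ K * Real.sin (K*s) := by
    nlinarith [mul_nonneg (by linarith [habs.1] : (0:ℝ) ≤ E + K) (by linarith : (0:ℝ) ≤ 1 + Real.sin (K*s)),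
      mul_nonneg (by linarith [habs.2] : (0:ℝ) ≤ E - K) (by linarith : (0:ℝ) ≤ 1 - Real.sin (K*s))]
  have hc2ge : -(55:ℝ)/100 ≤ Real.cos ((E:ℝ)*s) := by nlinarith [hc2sq]
  have hA : -(2 * Real.sin s) * Real.cos ((E:ℝ)*s) ≤ 44/100 := by
    nlinarith [mul_nonneg hsinpos (by linarith : (0:ℝ) ≤ Real.cos ((E:ℝ)*s) + 55/100)]
  have hC : 2*(E:ℝ)*Real.cos s*Real.sin ((E:ℝ)*s) ≥ 15106/10000 * E := by
    nlinarith [mul_nonneg (by linarith : (0:ℝ) ≤ Real.cos s - 91/100)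
        (by linarith : (0:ℝ) ≤ Real.sin ((E:ℝ)*s) - 83/100),
      mul_nonneg (by positivity : (0:ℝ) ≤ (E:ℝ))
        (by nlinarith : (0:ℝ) ≤ Real.cos s * Real.sin ((E:ℝ)*s) - 7553/10000)]
  linarith


theorem stmt_10 (n m : ℕ) (hn : 1 ≤ n) (hm : 1 ≤ m) :
    ∃ z : ℂ, ‖z‖ = 1 ∧ z ≠ -1 ∧ ¬ IsPrimitiveRoot z 3 ∧
      ((1 + X + X ^ (3 * m + 2) + X ^ (2 * n + 3 * m - 1)
          + X ^ (2 * n + 6 * m) + X ^ (2 * n + 6 * m + 1) : ℂ[X]).eval z = 0) ∧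
      (derivative (1 + X + X ^ (3 * m + 2) + X ^ (2 * n + 3 * m - 1)
          + X ^ (2 * n + 6 * m) + X ^ (2 * n + 6 * m + 1) : ℂ[X])).eval z ≠ 0 := by
  classical
  open Complex in
  set P : ℂ[X] := 1 + X + X ^ (3 * m + 2) + X ^ (2 * n + 3 * m - 1)
      + X ^ (2 * n + 6 * m) + X ^ (2 * n + 6 * m + 1) with hPdef
  have hE8 : 8 ≤ 2*n+6*m := by omega
  set K : ℝ := 2*(n:ℝ) - 3 with hKdef
  have hn' : (1:ℝ) ≤ (n:ℝ) := by exact_mod_cast hn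
  have hm' : (1:ℝ) ≤ (m:ℝ) := by exact_mod_cast hm
  have hKabs : |K| ≤ ((2*n+6*m : ℕ):ℝ) := by
    rw [abs_le]; push_cast; constructor <;> nlinarith
  obtain ⟨s, hs0, hsb, hroot, hderiv⟩ := real_root' (2*n+6*m) hE8 K hKabs
  have hπ := Real.pi_pos
  have hEpos : (0:ℝ) < ((2*n+6*m:ℕ):ℝ) := by positivity
  have hE8' : (8:ℝ) ≤ ((2*n+6*m:ℕ):ℝ) := by exact_mod_cast hE8
  set z : ℂ := Complex.exp (2*(s:ℂ)*Complex.I) with hzdef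
  -- s is small
  have hs_small : 2*s < Real.pi/2 := by
    have h1 : s < Real.pi / ((2*n+6*m:ℕ):ℝ) := hsb
    have h2 : Real.pi / ((2*n+6*m:ℕ):ℝ) ≤ Real.pi / 8 :=
      div_le_div_of_nonneg_left hπ.le (by norm_num) hE8'
    linarith
  -- |z| = 1
  have habs : ‖z‖ = 1 := by
    rw [hzdef, Complex.norm_exp]
    simp
  -- real part of z
  have hre : z.re = Real.cos (2*s) := by
    rw [hzdef, show (2*(s:ℂ)*Complex.I) = (((2*s : ℝ)):ℂ)*Complex.I by push_cast; ring,
      Complex.exp_ofReal_mul_I_re]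
  have hrepos : 0 < z.re := by
    rw [hre]
    exact Real.cos_pos_of_mem_Ioo ⟨by linarith, hs_small⟩
  have hzne1 : z ≠ -1 := by
    intro h
    rw [h] at hrepos; norm_num at hrepos
  have hznp : ¬ IsPrimitiveRoot z 3 := by
    intro hp
    have h3 : z^3 = 1 := hp.pow_eq_one
    have hne1 : z ≠ 1 := hp.ne_one (by norm_num)
    have hq : z^2 + z + 1 = 0 := by
      have hfac : (z - 1) * (z^2 + z + 1) = 0 := by linear_combination h3
      rcases mul_eq_zero.1 hfac with h | h
      · exact absurd (by linear_combination h) hne1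
      · exact h
    have hnorm : z.re*z.re + z.im*z.im = 1 := by
      have := Complex.sq_norm z
      rw [habs] at this
      simpa [Complex.normSq_apply, sq] using this.symm
    have hqre := congrArg Complex.re hq
    simp [pow_two, Complex.add_re, Complex.mul_re] at hqre
    nlinarith [hrepos, hqre, hnorm]
  -- the key functional identity
  have hBcast : ((2*n+3*m-1 : ℕ) : ℝ) = 2*(n:ℝ)+3*(m:ℝ)-1 := by
    have h : (1:ℕ) ≤ 2*n+3*m := by omega
    rw [Nat.cast_sub h]; push_cast; ring
  have hb : ((2*n+6*m : ℕ):ℝ) + 1 + K = 2*((2*n+3*m-1 : ℕ):ℝ) := by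
    rw [hBcast, hKdef]; push_cast; ring
  have ha : ((2*n+6*m : ℕ):ℝ) + 1 - K = 2*((3*m+2 : ℕ):ℝ) := by
    rw [hKdef]; push_cast; ring
  have hFG : ∀ t : ℝ, P.eval (Complex.exp (2*(t:ℂ)*Complex.I))
      = 2 * Complex.exp (((((2*n+6*m:ℕ):ℝ):ℂ)+1)*(t:ℂ)*Complex.I) *
        ((2 * Real.cos t * Real.cos (((2*n+6*m:ℕ):ℝ)*t) + Real.cos (K*t) : ℝ) : ℂ) := by
    intro t
    have hw : ∀ k : ℕ, (Complex.exp (2*(t:ℂ)*Complex.I))^k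
        = Complex.exp (2*(((k:ℕ):ℝ):ℂ)*(t:ℂ)*Complex.I) := by
      intro k
      rw [← Complex.exp_nat_mul]; congr 1; push_cast; ring
    have hkey := key_id' ((2*n+6*m:ℕ):ℝ) ((3*m+2 : ℕ):ℝ) ((2*n+3*m-1 : ℕ):ℝ) K t hb ha
    have hcast : ((2 * Real.cos t * Real.cos (((2*n+6*m:ℕ):ℝ)*t) + Real.cos (K*t) : ℝ) : ℂ)
        = 2 * Complex.cos (t:ℂ) * Complex.cos ((((2*n+6*m:ℕ):ℝ):ℂ)*(t:ℂ))
          + Complex.cos (((K:ℝ):ℂ)*(t:ℂ)) := by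
      push_cast; ring_nf
    rw [hcast]
    rw [hPdef]
    simp only [eval_add, eval_pow, eval_X, eval_one]
    rw [hw (3*m+2), hw (2*n+3*m-1), hw (2*n+6*m), hw (2*n+6*m+1)]
    convert hkey using 2 <;> push_cast <;> ring
  -- evaluation at the root
  have hevalz : P.eval z = 0 := by
    rw [hzdef, hFG s, hroot]
    simp
  -- derivative nonzero
  have hPderiv : (derivative P).eval z ≠ 0 := by
    -- LHS has derivative (derivative P).eval z * (z * (2I))
    have hinner : HasDerivAt (fun t:ℝ => 2*(t:ℂ)*Complex.I) (2*Complex.I) s := by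
      have h0 : HasDerivAt (fun t:ℝ => ((t:ℂ))) 1 s := Complex.ofRealCLM.hasDerivAt
      simpa using (h0.const_mul (2:ℂ)).mul_const Complex.I
    have hexp : HasDerivAt (fun t:ℝ => Complex.exp (2*(t:ℂ)*Complex.I))
        (z * (2*Complex.I)) s := by
      simpa [hzdef, mul_comm] using hinner.cexp
    have hcomp : HasDerivAt (fun t:ℝ => P.eval (Complex.exp (2*(t:ℂ)*Complex.I)))
        ((derivative P).eval z * (z * (2*Complex.I))) s := by
      have hp := P.hasDerivAt z
      exact hp.comp_of_eq s hexp hzdef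
    -- RHS derivative
    set E' : ℝ := ((2*n+6*m:ℕ):ℝ) with hE'def
    have hinner2 : HasDerivAt (fun t:ℝ => ((E':ℂ)+1)*(t:ℂ)*Complex.I) (((E':ℂ)+1)*Complex.I) s := by
      have h0 : HasDerivAt (fun t:ℝ => ((t:ℂ))) 1 s := Complex.ofRealCLM.hasDerivAt
      simpa using (h0.const_mul ((E':ℂ)+1)).mul_const Complex.I
    have hexp2 : HasDerivAt (fun t:ℝ => Complex.exp (((E':ℂ)+1)*(t:ℂ)*Complex.I))
        (Complex.exp (((E':ℂ)+1)*(s:ℂ)*Complex.I) * (((E':ℂ)+1)*Complex.I)) s := hinner2.cexp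
    have hh : HasDerivAt (fun t:ℝ => 2 * Real.cos t * Real.cos (E'*t) + Real.cos (K*t))
        (-(2 * Real.sin s) * Real.cos (E'*s) - 2*E'*Real.cos s*Real.sin (E'*s)
          - K * Real.sin (K*s)) s := by
      have h1 : HasDerivAt (fun t:ℝ => 2 * Real.cos t) (2 * (-Real.sin s)) s :=
        (Real.hasDerivAt_cos s).const_mul 2
      have h2 : HasDerivAt (fun t:ℝ => Real.cos (E'*t)) (-Real.sin (E'*s) * (E'*1)) s :=
        ((hasDerivAt_id s).const_mul E').cos
      have h3 : HasDerivAt (fun t:ℝ => Real.cos (K*t)) (-Real.sin (K*s) * (K*1)) s :=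
        ((hasDerivAt_id s).const_mul K).cos
      have := (h1.mul h2).add h3
      convert this using 1
      exacts [rfl, rfl, rfl, by ring]
    have hhC : HasDerivAt (fun t:ℝ => ((2 * Real.cos t * Real.cos (E'*t) + Real.cos (K*t) : ℝ) : ℂ))
        ((-(2 * Real.sin s) * Real.cos (E'*s) - 2*E'*Real.cos s*Real.sin (E'*s)
          - K * Real.sin (K*s) : ℝ) : ℂ) s := hh.ofReal_comp
    have hG : HasDerivAt (fun t:ℝ => 2 * Complex.exp (((E':ℂ)+1)*(t:ℂ)*Complex.I) *
        ((2 * Real.cos t * Real.cos (E'*t) + Real.cos (K*t) : ℝ) : ℂ))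
        (2 * (Complex.exp (((E':ℂ)+1)*(s:ℂ)*Complex.I) * (((E':ℂ)+1)*Complex.I)) *
            ((2 * Real.cos s * Real.cos (E'*s) + Real.cos (K*s) : ℝ) : ℂ)
          + 2 * Complex.exp (((E':ℂ)+1)*(s:ℂ)*Complex.I) *
            ((-(2 * Real.sin s) * Real.cos (E'*s) - 2*E'*Real.cos s*Real.sin (E'*s)
              - K * Real.sin (K*s) : ℝ) : ℂ)) s := by
      have := (hexp2.const_mul (2:ℂ)).mul hhC
      convert this using 1
      exacts [rfl, rfl]
    -- the two functions agree
    have huniq : (derivative P).eval z * (z * (2*Complex.I))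
        = 2 * (Complex.exp (((E':ℂ)+1)*(s:ℂ)*Complex.I) * (((E':ℂ)+1)*Complex.I)) *
            ((2 * Real.cos s * Real.cos (E'*s) + Real.cos (K*s) : ℝ) : ℂ)
          + 2 * Complex.exp (((E':ℂ)+1)*(s:ℂ)*Complex.I) *
            ((-(2 * Real.sin s) * Real.cos (E'*s) - 2*E'*Real.cos s*Real.sin (E'*s)
              - K * Real.sin (K*s) : ℝ) : ℂ) := by
      refine HasDerivAt.unique ?_ hG
      exact hcomp.congr_of_eventuallyEq (Filter.Eventually.of_forall (fun t => (hFG t).symm))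
    rw [hroot] at huniq
    simp only [Complex.ofReal_zero, mul_zero, zero_add] at huniq
    intro hcontra
    rw [hcontra, zero_mul] at huniq
    have hexpne : Complex.exp (((E':ℂ)+1)*(s:ℂ)*Complex.I) ≠ 0 := Complex.exp_ne_zero _
    have hdne : ((-(2 * Real.sin s) * Real.cos (E'*s) - 2*E'*Real.cos s*Real.sin (E'*s)
        - K * Real.sin (K*s) : ℝ) : ℂ) ≠ 0 := by
      simp only [ne_eq, Complex.ofReal_eq_zero]
      exact ne_of_lt hderiv
    exact (mul_ne_zero (mul_ne_zero two_ne_zero hexpne) hdne) huniq.symm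
  exact ⟨z, habs, hzne1, hznp, hevalz, hPderiv⟩
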